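/- Let n ≥ 3, let A be the adjacency matrix of the cycle C_n, and let A_− be the signed adjacency matrix of C_n in which exactly one edge has sign −1 and all other edges have sign +1. Then det(X·I − A) · det(X·I − A_−) = φ(X² − 2), where φ(Y) = det(Y·I − A) is the characteristic polynomial of A and φ(X² − 2) denotes its composition with the polynomial X² − 2. Equivalently, the square of the pseudo-characteristic function of C_n is φ(λ² − 2). -/

import Mathlib

open Matrix SimpleGraph Polynomial

variable {R : Type*} [CommRing R]

/-- cyclic bidiagonal matrix: `d i` on the diagonal, `u i` at position `(i, i+1)` (cyclically). -/
def cbd {n : ℕ} [NeZero n] (d u : Fin n → R) : Matrix (Fin n) (Fin n) R :=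
  Matrix.of fun i j => if j = i + 1 then u i else if j = i then d i else 0

theorem det_cbd {n : ℕ} (d u : Fin (n + 2) → R) :
    (cbd d u).det = ∏ i, d i + (-1) ^ (n + 1) * ∏ i, u i := by
  have hadd : ∀ i : Fin (n+2), (0 : Fin (n+2)) = i + 1 ↔ i = Fin.last (n+1) := by
    intro i
    constructor
    · intro h
      by_contra hne
      have h' := congrArg Fin.val h
      rw [Fin.val_add_one, if_neg hne, Fin.val_zero] at h'
      omega
    · intro h; subst h; ext; simp [Fin.val_add_one]
  rw [Matrix.det_succ_column_zero]
  rw [← Finset.sum_subset (Finset.subset_univ ({0, Fin.last (n+1)} : Finset (Fin (n+2))))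
    (by
      intro i _ hi
      simp only [Finset.mem_insert, Finset.mem_singleton] at hi
      push_neg at hi
      have h1 : (0 : Fin (n+2)) ≠ i + 1 := fun h => hi.2 ((hadd i).mp h)
      have h2 : (0 : Fin (n+2)) ≠ i := Ne.symm hi.1
      simp [cbd, h1, h2])]
  rw [Finset.sum_pair (by simp [Fin.ext_iff] : (0 : Fin (n+2)) ≠ Fin.last (n+1))]
  have e0 : cbd d u 0 0 = d 0 := by
    have h1 : (0 : Fin (n+2)) ≠ 0 + 1 := fun h => by
      have := (hadd 0).mp h; simp [Fin.ext_iff] at this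
    simp [cbd, h1]
  have el : cbd d u (Fin.last (n+1)) 0 = u (Fin.last (n+1)) := by
    have h1 : (0 : Fin (n+2)) = Fin.last (n+1) + 1 := (hadd _).mpr rfl
    simp [cbd, ← h1]
  rw [e0, el]
  have succ_ne : ∀ (i j : Fin (n+1)), j ≤ i → (j.succ : Fin (n+2)) ≠ i.succ + 1 := by
    intro i j hle h
    have h' := congrArg Fin.val h
    rw [Fin.val_add_one] at h'
    by_cases hl : (i.succ : Fin (n+2)) = Fin.last (n+1)
    · rw [if_pos hl, Fin.val_succ] at h'; omega
    · rw [if_neg hl, Fin.val_succ, Fin.val_succ] at h'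
      have := Fin.le_iff_val_le_val.mp hle
      omega
  have m0 : ((cbd d u).submatrix (Fin.succAbove 0) Fin.succ).det = ∏ i : Fin (n+1), d i.succ := by
    rw [Fin.succAbove_zero, Matrix.det_of_upperTriangular]
    · apply Finset.prod_congr rfl
      intro i _
      have h1 := succ_ne i i le_rfl
      simp [cbd, h1]
    · intro i j hlt
      have h1 := succ_ne i j (le_of_lt hlt)
      have h2 : (j.succ : Fin (n+2)) ≠ i.succ := fun h => absurd (Fin.succ_injective _ h) (ne_of_lt hlt)
      simp [cbd, h1, h2]
  have ml : ((cbd d u).submatrix (Fin.succAbove (Fin.last (n+1))) Fin.succ).det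
      = ∏ i : Fin (n+1), u i.castSucc := by
    rw [Fin.succAbove_last, Matrix.det_of_lowerTriangular]
    · apply Finset.prod_congr rfl
      intro i _
      simp [cbd, Fin.coeSucc_eq_succ]
    · intro i j hlt
      have hlt' : i < j := hlt
      have h1 : (j.succ : Fin (n+2)) ≠ i.castSucc + 1 := by
        rw [Fin.coeSucc_eq_succ]
        exact fun h => absurd (Fin.succ_injective _ h) (ne_of_gt hlt')
      have h2 : (j.succ : Fin (n+2)) ≠ i.castSucc := by
        intro h
        have h' := congrArg Fin.val h
        rw [Fin.val_succ, Fin.coe_castSucc] at h'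
        have := Fin.lt_iff_val_lt_val.mp hlt'
        omega
      simp [cbd, h1, h2, hlt'.ne']
  rw [m0, ml]
  simp only [Fin.prod_univ_succ d, Fin.prod_univ_castSucc u, Fin.val_last, Fin.val_zero,
    pow_zero, one_mul]
  ring

/-- signed cyclic shift: `1` at `(i, i+1)` except `ε` at `(0,1)`. -/
def shiftM (n : ℕ) [NeZero n] (ε : R) : Matrix (Fin n) (Fin n) R :=
  cbd (fun _ => 0) (fun i => if i = 0 then ε else 1)

theorem shiftM_map {n : ℕ} [NeZero n] {S : Type*} [CommRing S] (f : R →+* S) (ε : R) :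
    (shiftM n ε).map f = shiftM n (f ε) := by
  ext i j
  simp [shiftM, cbd, apply_ite f]

theorem det_shiftM {n : ℕ} (ε : R) :
    (shiftM (n + 2) ε).det = (-1) ^ (n + 1) * ε := by
  rw [shiftM, det_cbd]
  rw [Finset.prod_const, zero_pow (by simp), Finset.prod_ite_eq' Finset.univ 0 (fun _ => ε)]
  simp

theorem smul_one_sub_shiftM {n : ℕ} (r ε : R) :
    r • (1 : Matrix (Fin (n+2)) (Fin (n+2)) R) - shiftM (n+2) ε
      = cbd (fun _ => r) (fun i => -(if i = 0 then ε else 1)) := by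
  ext i j
  have hne : (j : Fin (n+2)) = i + 1 → j ≠ i := by
    rintro rfl h
    exact one_ne_zero (left_eq_add.mp h.symm)
  by_cases h1 : (j : Fin (n+2)) = i + 1
  · simp [shiftM, cbd, h1, hne h1, Matrix.one_apply, (hne h1).symm]
  · by_cases h2 : j = i
    · subst h2
      simp [shiftM, cbd, h1, Matrix.one_apply]
    · simp [shiftM, cbd, h1, h2, Matrix.one_apply, Ne.symm h2]

theorem det_smul_one_sub_shiftM {n : ℕ} (r ε : R) :
    (r • (1 : Matrix (Fin (n+2)) (Fin (n+2)) R) - shiftM (n+2) ε).det = r ^ (n+2) - ε := by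
  rw [smul_one_sub_shiftM, det_cbd, Finset.prod_const, Finset.card_univ, Fintype.card_fin]
  have : ∏ i : Fin (n+2), -(if i = 0 then ε else 1) = (-1)^(n+2) * ε := by
    rw [show (fun i : Fin (n+2) => -(if i = 0 then ε else 1))
        = fun i => (-1) * (if i = 0 then ε else 1) by funext i; ring]
    rw [Finset.prod_mul_distrib, Finset.prod_const, Finset.card_univ, Fintype.card_fin,
      Finset.prod_ite_eq' Finset.univ 0 (fun _ => ε)]
    simp
  rw [this]
  ring_nf
  have h2 : ((-1:R)) ^ (n*2) = 1 := by rw [mul_comm, pow_mul]; simp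
  rw [h2, mul_one]

theorem shiftM_mul_transpose {n : ℕ} (ε : R) (hε : ε * ε = 1) :
    shiftM (n+2) ε * (shiftM (n+2) ε)ᵀ = 1 := by
  ext i j
  rw [Matrix.mul_apply]
  have hS : ∀ (a b : Fin (n+2)), shiftM (n+2) ε a b
      = if b = a + 1 then (if a = 0 then ε else 1) else 0 := by
    intro a b
    simp [shiftM, cbd]
  simp only [Matrix.transpose_apply, hS]
  rw [Finset.sum_eq_single (i+1)]
  · by_cases h : i = j
    · subst h
      simp only [if_pos rfl, Matrix.one_apply_eq]
      by_cases h0 : i = 0 <;> simp [h0, hε]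
    · have : i + 1 ≠ j + 1 := fun hc => h (add_right_cancel hc)
      simp [this, Matrix.one_apply, h]
  · intro k _ hk
    simp [hk]
  · simp

theorem det_main {n : ℕ} (r r' ε : R) (h1 : r * r' = 1) (hε : ε * ε = 1) :
    ((r + r') • (1 : Matrix (Fin (n+2)) (Fin (n+2)) R) - (shiftM (n+2) ε + (shiftM (n+2) ε)ᵀ)).det
      = r ^ (n+2) + r' ^ (n+2) - 2 * ε := by
  set S := shiftM (n+2) ε with hS
  set M := (r + r') • (1 : Matrix (Fin (n+2)) (Fin (n+2)) R) - (S + Sᵀ) with hM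
  have hST : S * Sᵀ = 1 := shiftM_mul_transpose ε hε
  have hTS : Sᵀ * S = 1 := mul_eq_one_comm.mp hST
  have key : M * S = -((r • (1 : Matrix (Fin (n+2)) (Fin (n+2)) R) - S)
      * (r' • (1 : Matrix (Fin (n+2)) (Fin (n+2)) R) - S)) := by
    rw [hM]
    rw [Matrix.sub_mul, Matrix.add_mul, hTS, Matrix.smul_mul, Matrix.one_mul]
    simp only [Matrix.sub_mul, Matrix.mul_sub, Matrix.smul_mul, Matrix.mul_smul,
      Matrix.one_mul, Matrix.mul_one, smul_sub, smul_smul]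
    rw [show r' * r = 1 by rw [mul_comm]; exact h1, one_smul, add_smul]
    abel
  have hdet : M.det * S.det = (-1)^(n+2) * ((r^(n+2) - ε) * (r'^(n+2) - ε)) := by
    rw [← Matrix.det_mul, key, Matrix.det_neg, Matrix.det_mul,
      det_smul_one_sub_shiftM, det_smul_one_sub_shiftM, Fintype.card_fin]
  have hdetS : S.det = (-1)^(n+1) * ε := det_shiftM ε
  have hp : ((-1:R)^(n+1)) * ((-1:R)^(n+1)) = 1 := by
    rw [← pow_add, show (n+1)+(n+1) = 2*(n+1) by ring, pow_mul]
    norm_num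
  have hab : r^(n+2) * r'^(n+2) = 1 := by rw [← mul_pow, h1, one_pow]
  have : M.det = M.det * (S.det * ((-1)^(n+1) * ε)) := by
    rw [hdetS]
    linear_combination (-M.det*ε*ε)*hp + (-M.det)*hε
  rw [this, ← mul_assoc, hdet, pow_succ (-1:R) (n+1)]
  set p := ((-1:R)^(n+1))
  set a := r^(n+2)
  set b := r'^(n+2)
  linear_combination (-ε*(a-ε)*(b-ε))*hp + (a+b-ε)*hε + (-ε)*hab

open SimpleGraph in
theorem shiftM_apply {n : ℕ} [NeZero n] (ε : R) (i j : Fin n) :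
    shiftM n ε i j = if j = i + 1 then (if i = 0 then ε else 1) else 0 := by
  simp [shiftM, cbd]

section adjEq

variable (m : ℕ)

theorem fin_two_ne_zero : ((1 : Fin (m+3)) + 1) ≠ 0 := by
  intro h
  have := congrArg Fin.val h
  rw [Fin.val_add, Fin.val_one, Fin.val_zero, Nat.mod_eq_of_lt (by omega)] at this
  omega

theorem not_both {u v : Fin (m+3)} : ¬(v = u + 1 ∧ u = v + 1) := by
  rintro ⟨h1, h2⟩
  rw [h1, add_assoc] at h2
  exact fin_two_ne_zero m (left_eq_add.mp h2)

end adjEq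

theorem self_ne_add_two (m : ℕ) (u : Fin (m+3)) : u ≠ u + 1 + 1 := by
  intro h
  rw [add_assoc] at h
  exact fin_two_ne_zero m (left_eq_add.mp h)

/-- The signed adjacency matrix of the cycle `C_n` (here `n = m + 3 ≥ 3`) in which exactly
one edge (the edge `{0, 1}`) has sign `−1` and all other edges have sign `+1`. -/
noncomputable def negCycleAdj (m : ℕ) : Matrix (Fin (m + 3)) (Fin (m + 3)) ℝ :=
  Matrix.of fun u v =>
    if (u = 0 ∧ v = 1) ∨ (u = 1 ∧ v = 0) then (-1 : ℝ)
    else (cycleGraph (m + 3)).adjMatrix ℝ u v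

open SimpleGraph in
theorem cycleGraph_adj_iff (m : ℕ) (u v : Fin (m+3)) :
    (cycleGraph (m+3)).Adj u v ↔ v = u + 1 ∨ u = v + 1 := by
  rw [cycleGraph_adj (n := m+1)]
  constructor
  · rintro (h | h)
    · right; rw [sub_eq_iff_eq_add] at h; rw [h]; exact add_comm 1 v
    · left; rw [sub_eq_iff_eq_add] at h; rw [h]; exact add_comm 1 u
  · rintro (h | h)
    · right; rw [h]; exact add_sub_cancel_left u 1
    · left; rw [h]; exact add_sub_cancel_left v 1

open SimpleGraph in
theorem adjMatrix_eq_shift (m : ℕ) :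
    (cycleGraph (m+3)).adjMatrix ℝ = shiftM (m+3) 1 + (shiftM (m+3) 1)ᵀ := by
  ext u v
  rw [Matrix.add_apply, Matrix.transpose_apply, shiftM_apply, shiftM_apply, adjMatrix_apply]
  simp only [cycleGraph_adj_iff, ite_self]
  by_cases h1 : v = u + 1
  · have h2 : ¬(u = v + 1) := fun h2 => not_both m ⟨h1, h2⟩
    simp [h1, h2, self_ne_add_two m u]
  · by_cases h2 : u = v + 1
    · simp [h1, h2, self_ne_add_two m v]
    · simp [h1, h2]

theorem negCycleAdj_eq_shift (m : ℕ) :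
    negCycleAdj m = shiftM (m+3) (-1) + (shiftM (m+3) (-1))ᵀ := by
  ext u v
  rw [Matrix.add_apply, Matrix.transpose_apply, shiftM_apply, shiftM_apply]
  rw [negCycleAdj, Matrix.of_apply]
  have h01 : (1 : Fin (m+3)) = 0 + 1 := by rw [zero_add]
  have h20 : ¬((0:Fin (m+3)) = 1 + 1) := fun h => fin_two_ne_zero m h.symm
  by_cases hs : (u = 0 ∧ v = 1) ∨ (u = 1 ∧ v = 0)
  · rcases hs with ⟨hu, hv⟩ | ⟨hu, hv⟩
    · subst hu; subst hv
      rw [if_pos (Or.inl ⟨rfl, rfl⟩), if_pos h01, if_pos rfl, if_neg h20, add_zero]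
    · subst hu; subst hv
      rw [if_pos (Or.inr ⟨rfl, rfl⟩), if_neg h20, if_pos h01, if_pos rfl, zero_add]
  · rw [if_neg hs, SimpleGraph.adjMatrix_apply]
    simp only [cycleGraph_adj_iff]
    push_neg at hs
    by_cases h1 : v = u + 1
    · have h2 : ¬(u = v + 1) := fun h2 => not_both m ⟨h1, h2⟩
      have hu0 : u ≠ 0 := by
        intro h; subst h
        rw [zero_add] at h1
        exact (hs.1 rfl) h1
      simp [h1, h2, hu0, self_ne_add_two m u]
    · by_cases h2 : u = v + 1
      · have hv0 : v ≠ 0 := by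
          intro h; subst h
          rw [zero_add] at h2
          exact (hs.2 h2) rfl
        simp [h1, h2, hv0, self_ne_add_two m v]
      · simp [h1, h2]

noncomputable section Char

/-- the quadratic `Y² - X·Y + 1` over `ℝ[X]`. -/
def quadQ : Polynomial (Polynomial ℝ) := X ^ 2 - C X * X + 1

theorem quadQ_degree : quadQ.degree = 2 := by
  unfold quadQ
  compute_degree!

theorem quadQ_inj : Function.Injective (AdjoinRoot.of quadQ) :=
  AdjoinRoot.of.injective_of_degree_ne_zero (by rw [quadQ_degree]; norm_num)

theorem root_rel :
    AdjoinRoot.root quadQ * (AdjoinRoot.of quadQ X - AdjoinRoot.root quadQ) = 1 := by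
  have h : eval₂ (AdjoinRoot.of quadQ) (AdjoinRoot.root quadQ) (X ^ 2 - C X * X + 1) = 0 :=
    AdjoinRoot.eval₂_root quadQ
  simp only [eval₂_add, eval₂_sub, eval₂_mul, eval₂_pow, eval₂_C, eval₂_X, eval₂_one] at h
  linear_combination -h

theorem charpoly_shift (m : ℕ) (ε : ℝ) (hε : ε * ε = 1) :
    (shiftM (m+3) ε + (shiftM (m+3) ε)ᵀ).charpoly
      = dickson 1 1 (m+3) - C (2 * ε) := by
  apply quadQ_inj
  set φ := AdjoinRoot.of quadQ with hφ
  set r := AdjoinRoot.root quadQ with hr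
  set r' := φ X - r with hr'
  have h1 : r * r' = 1 := root_rel
  have hsum : r + r' = φ X := by rw [hr']; ring
  -- LHS: map the characteristic matrix
  rw [Matrix.charpoly, RingHom.map_det, RingHom.mapMatrix_apply]
  have hmat : (Matrix.charmatrix (shiftM (m+3) ε + (shiftM (m+3) ε)ᵀ)).map φ
      = (r + r') • (1 : Matrix (Fin (m+3)) (Fin (m+3)) (AdjoinRoot quadQ))
        - (shiftM (m+3) (φ (C ε)) + (shiftM (m+3) (φ (C ε)))ᵀ) := by
    have : (shiftM (m+3) ε + (shiftM (m+3) ε)ᵀ).map (φ.comp C)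
        = shiftM (m+3) (φ (C ε)) + (shiftM (m+3) (φ (C ε)))ᵀ := by
      ext i j
      simp [shiftM_apply, apply_ite (fun x : ℝ => φ (C x)), _root_.map_one, map_zero]
    rw [← this]
    ext i j
    by_cases h : i = j
    · subst h
      simp [Matrix.charmatrix_apply_eq, hsum]
    · simp [Matrix.charmatrix_apply_ne _ _ _ h, Matrix.one_apply_ne h, h]
  rw [hmat]
  have hdm : ((r + r') • (1 : Matrix (Fin (m+3)) (Fin (m+3)) (AdjoinRoot quadQ))
      - (shiftM (m+3) (φ (C ε)) + (shiftM (m+3) (φ (C ε)))ᵀ)).det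
        = r ^ (m+3) + r' ^ (m+3) - 2 * (φ (C ε)) :=
    det_main (n := m+1) r r' (φ (C ε)) h1
      (by rw [← _root_.map_mul, ← _root_.map_mul, hε, _root_.map_one, _root_.map_one])
  rw [hdm]
  -- RHS
  rw [map_sub]
  have hd : φ (dickson 1 1 (m+3)) = r ^ (m+3) + r' ^ (m+3) := by
    conv_lhs => rw [← Polynomial.eval₂_C_X (p := dickson 1 1 (m+3)), Polynomial.hom_eval₂]
    rw [Polynomial.eval₂_eq_eval_map, Polynomial.map_dickson, _root_.map_one, ← hsum]
    exact Polynomial.dickson_one_one_eval_add_inv r r' h1 (m+3)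
  rw [hd]
  have h2 : φ (C (2 * ε)) = 2 * φ (C ε) := by
    rw [Polynomial.C_mul, map_ofNat, _root_.map_mul, map_ofNat]
  rw [h2]

end Char

theorem cycle_charpoly_prod_eq_comp (m : ℕ) :
    ((cycleGraph (m + 3)).adjMatrix ℝ).charpoly * (negCycleAdj m).charpoly =
      ((cycleGraph (m + 3)).adjMatrix ℝ).charpoly.comp (X ^ 2 - C 2) := by
  rw [adjMatrix_eq_shift, negCycleAdj_eq_shift,
    charpoly_shift m 1 (by norm_num), charpoly_shift m (-1) (by norm_num)]
  have e1 : (C (2*(1:ℝ)) : ℝ[X]) = C 2 := by rw [mul_one]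
  have e2 : (C (2*(-1:ℝ)) : ℝ[X]) = - C 2 := by
    rw [show (2*(-1:ℝ)) = -2 by norm_num, map_neg]
  have hC2 : (C (2:ℝ) : ℝ[X]) = 2 := map_ofNat C 2
  rw [e1, e2]
  set D := dickson 1 (1:ℝ) (m+3) with hD
  have hX2 : (X^2 - C 2 : ℝ[X]) = dickson 1 1 2 := by
    rw [dickson_two, hC2]
    norm_num
  have hcomp : D.comp (X^2 - C 2) = D * D - C 2 := by
    rw [hX2, hD, ← dickson_one_one_mul, show ((m:ℕ)+3)*2 = 2*(m+3) by ring,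
      dickson_one_one_mul, ← hX2, sub_comp, pow_comp, X_comp, C_comp]
    ring
  rw [sub_comp, C_comp, hcomp, hC2]
  ring
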